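/- Under the assumptions of the regularized accelerated method: if A_k > 0, σ > 0, and x_k satisfies φ_σ(x_k) - φ_σ* ≤ ‖x₀ - x_σ*‖²/(2A_k), where φ_σ(x) = φ(x) + (σ/2)‖x - x₀‖² is σ-strongly convex with minimizer x_σ* and minimum φ_σ*, then ‖x_k - x₀‖ ≤ (1 + 1/√(σ·A_k))·dist(x₀, X*), where X* = argmin φ. -/

import Mathlib

open Filter Topology

lemma quad_identity {E : Type*} [NormedAddCommGroup E] [InnerProductSpace ℝ E]
    (a b : ℝ) (hab : a + b = 1) (u v : E) :
    ‖a • u + b • v‖ ^ 2 = a * ‖u‖ ^ 2 + b * ‖v‖ ^ 2 - a * b * ‖u - v‖ ^ 2 := by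
  have h1 : ‖a • u + b • v‖ ^ 2 =
      a ^ 2 * ‖u‖ ^ 2 + 2 * (a * b) * inner ℝ u v + b ^ 2 * ‖v‖ ^ 2 := by
    rw [norm_add_sq_real, norm_smul, norm_smul, real_inner_smul_left, real_inner_smul_right,
      mul_pow, mul_pow, Real.norm_eq_abs, Real.norm_eq_abs, sq_abs, sq_abs]
    ring
  have h2 : ‖u - v‖ ^ 2 = ‖u‖ ^ 2 - 2 * inner ℝ u v + ‖v‖ ^ 2 := norm_sub_sq_real u v
  obtain rfl : b = 1 - a := by linarith
  rw [h1, h2]; ring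

theorem stmt15 {E : Type*} [NormedAddCommGroup E] [InnerProductSpace ℝ E]
    [FiniteDimensional ℝ E]
    (φ : E → ℝ) (hconv : ConvexOn ℝ Set.univ φ) (hlsc : LowerSemicontinuous φ)
    (Xstar : Set E) (hX : Xstar = {z | ∀ x, φ z ≤ φ x}) (hne : Xstar.Nonempty)
    (x₀ xσ xk : E) (σ Ak : ℝ) (hσ : 0 < σ) (hAk : 0 < Ak)
    (hxσ : ∀ x, φ xσ + σ / 2 * ‖xσ - x₀‖ ^ 2 ≤ φ x + σ / 2 * ‖x - x₀‖ ^ 2)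
    (hbound : (φ xk + σ / 2 * ‖xk - x₀‖ ^ 2) - (φ xσ + σ / 2 * ‖xσ - x₀‖ ^ 2) ≤
      ‖x₀ - xσ‖ ^ 2 / (2 * Ak)) :
    ‖xk - x₀‖ ≤ (1 + 1 / Real.sqrt (σ * Ak)) * Metric.infDist x₀ Xstar := by
  set F : E → ℝ := fun x => φ x + σ / 2 * ‖x - x₀‖ ^ 2 with hF
  set c : ℝ := ‖xk - xσ‖ with hc
  set d : ℝ := ‖x₀ - xσ‖ with hd
  set s : ℝ := Real.sqrt (σ * Ak) with hs
  have hs_pos : 0 < s := Real.sqrt_pos.mpr (by positivity)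
  -- strong convexity: σ/2 * c^2 ≤ F xk - F xσ
  have key : ∀ t ∈ Set.Ioo (0:ℝ) 1, σ / 2 * c ^ 2 ≤ (F xk - F xσ) + σ / 2 * t * c ^ 2 := by
    intro t ht
    have ht0 : 0 < t := ht.1
    have ht1 : t < 1 := ht.2
    have hab : t + (1 - t) = 1 := by ring
    have hφ := hconv.2 (Set.mem_univ xk) (Set.mem_univ xσ) (le_of_lt ht0)
      (by linarith : (0:ℝ) ≤ 1 - t) hab
    have hquad : ‖(t • xk + (1 - t) • xσ) - x₀‖ ^ 2 =
        t * ‖xk - x₀‖ ^ 2 + (1 - t) * ‖xσ - x₀‖ ^ 2 - t * (1 - t) * c ^ 2 := by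
      have heq : (t • xk + (1 - t) • xσ) - x₀ = t • (xk - x₀) + (1 - t) • (xσ - x₀) := by
        module
      rw [heq, quad_identity t (1 - t) hab]
      congr 1
      rw [hc]
      congr 2
      abel
    have hmin := hxσ (t • xk + (1 - t) • xσ)
    have hFconv : F (t • xk + (1 - t) • xσ) ≤
        t * F xk + (1 - t) * F xσ - σ / 2 * (t * (1 - t)) * c ^ 2 := by
      simp only [hF]
      rw [hquad]
      simp only [smul_eq_mul] at hφ
      nlinarith [hφ]
    have h2 : F xσ ≤ t * F xk + (1 - t) * F xσ - σ / 2 * (t * (1 - t)) * c ^ 2 :=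
      le_trans hmin hFconv
    have h3 : σ / 2 * (1 - t) * c ^ 2 ≤ F xk - F xσ := by
      have := h2
      nlinarith
    nlinarith
  have hstrong : σ / 2 * c ^ 2 ≤ F xk - F xσ := by
    have htend : Tendsto (fun t : ℝ => (F xk - F xσ) + σ / 2 * t * c ^ 2) (𝓝[>] (0:ℝ))
        (𝓝 ((F xk - F xσ) + σ / 2 * 0 * c ^ 2)) := by
      apply Tendsto.mono_left _ nhdsWithin_le_nhds
      exact ((continuous_const.add (((continuous_const.mul continuous_id).mul
        continuous_const))).tendsto 0)
    simp only [mul_zero, zero_mul, add_zero] at htend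
    refine ge_of_tendsto htend ?_
    filter_upwards [Ioo_mem_nhdsGT_of_mem (by norm_num : (0:ℝ) ∈ Set.Ico (0:ℝ) 1)] with t ht
    exact key t ht
  -- hence c ≤ d / s
  have hcd : c ≤ d / s := by
    have h1 : σ / 2 * c ^ 2 ≤ d ^ 2 / (2 * Ak) := le_trans hstrong hbound
    have h2 : c ^ 2 ≤ (d / s) ^ 2 := by
      rw [div_pow, hs, Real.sq_sqrt (by positivity : (0:ℝ) ≤ σ * Ak),
        le_div_iff₀ (by positivity : (0:ℝ) < σ * Ak)]
      have h1' : σ / 2 * c ^ 2 * (2 * Ak) ≤ d ^ 2 :=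
        (le_div_iff₀ (by positivity : (0:ℝ) < 2 * Ak)).mp h1
      nlinarith
    have hds : 0 ≤ d / s := by positivity
    calc c = Real.sqrt (c ^ 2) := (Real.sqrt_sq (norm_nonneg _)).symm
      _ ≤ Real.sqrt ((d / s) ^ 2) := Real.sqrt_le_sqrt h2
      _ = d / s := Real.sqrt_sq hds
  -- d ≤ infDist
  have hdist : d ≤ Metric.infDist x₀ Xstar := by
    rw [Metric.infDist_eq_iInf]
    haveI : Nonempty ↥Xstar := hne.to_subtype
    refine le_ciInf fun zz => ?_
    obtain ⟨z, hz⟩ := zz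
    rw [hX] at hz
    have h1 := hxσ z
    have h2 : φ z ≤ φ xσ := hz xσ
    have h3 : ‖xσ - x₀‖ ^ 2 ≤ ‖z - x₀‖ ^ 2 := by nlinarith
    have h4 : ‖xσ - x₀‖ ≤ ‖z - x₀‖ := by
      calc ‖xσ - x₀‖ = Real.sqrt (‖xσ - x₀‖ ^ 2) := (Real.sqrt_sq (norm_nonneg _)).symm
        _ ≤ Real.sqrt (‖z - x₀‖ ^ 2) := Real.sqrt_le_sqrt h3
        _ = ‖z - x₀‖ := Real.sqrt_sq (norm_nonneg _)
    rw [hd, norm_sub_rev, dist_eq_norm, norm_sub_rev x₀ z]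
    exact h4
  -- combine
  have htri : ‖xk - x₀‖ ≤ c + d := by
    calc ‖xk - x₀‖ ≤ ‖xk - xσ‖ + ‖xσ - x₀‖ := norm_sub_le_norm_sub_add_norm_sub _ _ _
      _ = c + d := by rw [hc, hd, norm_sub_rev xσ x₀]
  calc ‖xk - x₀‖ ≤ c + d := htri
    _ ≤ d / s + d := by linarith
    _ = (1 + 1 / s) * d := by rw [add_mul, one_mul, one_div_mul_eq_div, add_comm]
    _ ≤ (1 + 1 / s) * Metric.infDist x₀ Xstar := by
        have h0 : (0:ℝ) < 1 / s := div_pos one_pos hs_pos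
        exact mul_le_mul_of_nonneg_left hdist (by linarith)
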